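/- Let G = G₁ # G₂ be a 0-sum (disjoint union) of G₁ and G₂. Then Cut□(G) is normal if and only if both Cut□(G₁) and Cut□(G₂) are normal. -/

import Mathlib

open Finset

variable {V : Type} [DecidableEq V]

def cutFun (S : Finset V) : Sym2 V → ℤ :=
  Sym2.lift ⟨fun i j => |(if i ∈ S then (1 : ℤ) else 0) - (if j ∈ S then (1 : ℤ) else 0)|,
    fun i j => abs_sub_comm _ _⟩

def zSpan {ι : Type} (B : Set (ι → ℤ)) : Set (ι → ℤ) :=
  {x | ∃ (s : Finset (ι → ℤ)) (c : (ι → ℤ) → ℤ), ↑s ⊆ B ∧ x = ∑ b ∈ s, c b • b}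

def zPlus {ι : Type} (B : Set (ι → ℤ)) : Set (ι → ℤ) :=
  {x | ∃ (s : Finset (ι → ℤ)) (c : (ι → ℤ) → ℤ), ↑s ⊆ B ∧ (∀ b ∈ s, 0 ≤ c b) ∧
    x = ∑ b ∈ s, c b • b}

def toQ {ι : Type} (x : ι → ℤ) : ι → ℚ := fun i => (x i : ℚ)

def qPlus {ι : Type} (B : Set (ι → ℤ)) : Set (ι → ℚ) :=
  {x | ∃ (s : Finset (ι → ℤ)) (c : (ι → ℤ) → ℚ), ↑s ⊆ B ∧ (∀ b ∈ s, 0 ≤ c b) ∧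
    x = ∑ b ∈ s, c b • toQ b}

def AG (G : SimpleGraph V) : Set (↥G.edgeSet → ℤ) :=
  {x | ∃ S : Finset V, x = fun e => cutFun S e.1}

def XG (G : SimpleGraph V) : Set (Option ↥G.edgeSet → ℤ) :=
  {x | ∃ S : Finset V, x = fun o => Option.elim o 1 (fun e => cutFun S e.1)}

def IsNormal (G : SimpleGraph V) : Prop :=
  zPlus (XG G) = zSpan (XG G) ∩ toQ ⁻¹' qPlus (XG G)

def IsMinor {W : Type} (H : SimpleGraph W) (G : SimpleGraph V) : Prop :=
  ∃ f : W → Set V,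
    (∀ w, (G.induce (f w)).Connected) ∧
    (Pairwise fun w₁ w₂ => Disjoint (f w₁) (f w₂)) ∧
    (∀ w₁ w₂, H.Adj w₁ w₂ → ∃ a ∈ f w₁, ∃ b ∈ f w₂, G.Adj a b)

open Classical in
noncomputable def extZ {G : SimpleGraph V} (x : ↥G.edgeSet → ℤ) : Sym2 V → ℤ :=
  fun e => if h : e ∈ G.edgeSet then x ⟨e, h⟩ else 0

open Classical in
noncomputable def extQ {G : SimpleGraph V} (x : ↥G.edgeSet → ℚ) : Sym2 V → ℚ :=
  fun e => if h : e ∈ G.edgeSet then x ⟨e, h⟩ else 0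


section Generic
variable {ι : Type} {B B' : Set (ι → ℤ)}

attribute [local instance] Classical.propDecidable

lemma sum_split {M : Type*} [AddCommMonoid M] (s₁ s₂ : Finset (ι → ℤ)) (f₁ f₂ : (ι → ℤ) → M) :
    ∑ b ∈ s₁ ∪ s₂, ((if b ∈ s₁ then f₁ b else 0) + (if b ∈ s₂ then f₂ b else 0))
      = (∑ b ∈ s₁, f₁ b) + ∑ b ∈ s₂, f₂ b := by
  rw [Finset.sum_add_distrib, Finset.sum_ite_mem, Finset.sum_ite_mem,
    Finset.union_inter_cancel_left, Finset.union_inter_cancel_right]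

lemma zero_mem_zSpan : (0 : ι → ℤ) ∈ zSpan B :=
  ⟨∅, 0, by simp, by simp⟩

lemma zero_mem_zPlus : (0 : ι → ℤ) ∈ zPlus B :=
  ⟨∅, 0, by simp, by simp, by simp⟩

lemma zero_mem_qPlus : (0 : ι → ℚ) ∈ qPlus B :=
  ⟨∅, 0, by simp, by simp, by simp⟩

lemma smul_mem_zSpan {b : ι → ℤ} (hb : b ∈ B) (a : ℤ) : a • b ∈ zSpan B :=
  ⟨{b}, fun _ => a, by simpa, by simp⟩

lemma smul_mem_zPlus {b : ι → ℤ} (hb : b ∈ B) {a : ℤ} (ha : 0 ≤ a) : a • b ∈ zPlus B :=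
  ⟨{b}, fun _ => a, by simpa, fun _ _ => ha, by simp⟩

lemma smul_mem_qPlus {b : ι → ℤ} (hb : b ∈ B) {a : ℚ} (ha : 0 ≤ a) : a • toQ b ∈ qPlus B :=
  ⟨{b}, fun _ => a, by simpa, fun _ _ => ha, by simp⟩

lemma add_mem_zSpan {x y : ι → ℤ} (hx : x ∈ zSpan B) (hy : y ∈ zSpan B) :
    x + y ∈ zSpan B := by
  classical
  obtain ⟨s₁, c₁, hs₁, rfl⟩ := hx
  obtain ⟨s₂, c₂, hs₂, rfl⟩ := hy
  refine ⟨s₁ ∪ s₂, fun b => (if b ∈ s₁ then c₁ b else 0) + (if b ∈ s₂ then c₂ b else 0),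
    ?_, ?_⟩
  · rw [Finset.coe_union]; exact Set.union_subset hs₁ hs₂
  · rw [← sum_split s₁ s₂ (fun b => c₁ b • b) (fun b => c₂ b • b)]
    refine Finset.sum_congr rfl fun b _ => ?_
    split_ifs <;> simp [*, add_smul]

lemma add_mem_zPlus {x y : ι → ℤ} (hx : x ∈ zPlus B) (hy : y ∈ zPlus B) :
    x + y ∈ zPlus B := by
  classical
  obtain ⟨s₁, c₁, hs₁, hc₁, rfl⟩ := hx
  obtain ⟨s₂, c₂, hs₂, hc₂, rfl⟩ := hy
  refine ⟨s₁ ∪ s₂, fun b => (if b ∈ s₁ then c₁ b else 0) + (if b ∈ s₂ then c₂ b else 0),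
    ?_, ?_, ?_⟩
  · rw [Finset.coe_union]; exact Set.union_subset hs₁ hs₂
  · intro b _
    have : (0:ℤ) ≤ if b ∈ s₁ then c₁ b else 0 := by split_ifs with h; exacts [hc₁ b h, le_refl 0]
    have h2 : (0:ℤ) ≤ if b ∈ s₂ then c₂ b else 0 := by split_ifs with h; exacts [hc₂ b h, le_refl 0]
    positivity
  · rw [← sum_split s₁ s₂ (fun b => c₁ b • b) (fun b => c₂ b • b)]
    refine Finset.sum_congr rfl fun b _ => ?_
    split_ifs <;> simp [*, add_smul]

lemma add_mem_qPlus {x y : ι → ℚ} (hx : x ∈ qPlus B) (hy : y ∈ qPlus B) :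
    x + y ∈ qPlus B := by
  classical
  obtain ⟨s₁, c₁, hs₁, hc₁, rfl⟩ := hx
  obtain ⟨s₂, c₂, hs₂, hc₂, rfl⟩ := hy
  refine ⟨s₁ ∪ s₂, fun b => (if b ∈ s₁ then c₁ b else 0) + (if b ∈ s₂ then c₂ b else 0),
    ?_, ?_, ?_⟩
  · rw [Finset.coe_union]; exact Set.union_subset hs₁ hs₂
  · intro b _
    have : (0:ℚ) ≤ if b ∈ s₁ then c₁ b else 0 := by split_ifs with h; exacts [hc₁ b h, le_refl 0]
    have h2 : (0:ℚ) ≤ if b ∈ s₂ then c₂ b else 0 := by split_ifs with h; exacts [hc₂ b h, le_refl 0]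
    positivity
  · rw [← sum_split s₁ s₂ (fun b => c₁ b • toQ b) (fun b => c₂ b • toQ b)]
    refine Finset.sum_congr rfl fun b _ => ?_
    split_ifs <;> simp [*, add_smul]

lemma sum_mem_zSpan {β : Type*} {s : Finset β} {f : β → ι → ℤ} {c : β → ℤ}
    (hf : ∀ b ∈ s, f b ∈ B) : (∑ b ∈ s, c b • f b) ∈ zSpan B :=
  Finset.sum_induction _ _ (fun _ _ => add_mem_zSpan) zero_mem_zSpan
    (fun b hb => smul_mem_zSpan (hf b hb) (c b))

lemma sum_mem_zPlus {β : Type*} {s : Finset β} {f : β → ι → ℤ} {c : β → ℤ}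
    (hf : ∀ b ∈ s, f b ∈ B) (hc : ∀ b ∈ s, 0 ≤ c b) : (∑ b ∈ s, c b • f b) ∈ zPlus B :=
  Finset.sum_induction _ _ (fun _ _ => add_mem_zPlus) zero_mem_zPlus
    (fun b hb => smul_mem_zPlus (hf b hb) (hc b hb))

lemma sum_mem_qPlus {β : Type*} {s : Finset β} {f : β → ι → ℤ} {c : β → ℚ}
    (hf : ∀ b ∈ s, f b ∈ B) (hc : ∀ b ∈ s, 0 ≤ c b) : (∑ b ∈ s, c b • toQ (f b)) ∈ qPlus B :=
  Finset.sum_induction _ _ (fun _ _ => add_mem_qPlus) zero_mem_qPlus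
    (fun b hb => smul_mem_qPlus (hf b hb) (hc b hb))

lemma mem_zPlus_of_mem {b : ι → ℤ} (hb : b ∈ B) : b ∈ zPlus B := by
  simpa using smul_mem_zPlus hb zero_le_one

lemma toQ_sum {β : Type*} (s : Finset β) (f : β → ι → ℤ) :
    toQ (∑ b ∈ s, f b) = ∑ b ∈ s, toQ (f b) := by
  funext i; simp [toQ, Finset.sum_apply]

lemma toQ_smul (a : ℤ) (x : ι → ℤ) : toQ (a • x) = (a : ℚ) • toQ x := by
  funext i; simp [toQ]

lemma zPlus_subset_inter : zPlus B ⊆ zSpan B ∩ toQ ⁻¹' qPlus B := by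
  rintro x ⟨s, c, hs, hc, rfl⟩
  refine ⟨⟨s, c, hs, rfl⟩, ?_⟩
  have : toQ (∑ b ∈ s, c b • b) = ∑ b ∈ s, ((c b : ℚ)) • toQ b := by
    rw [toQ_sum]; exact Finset.sum_congr rfl fun b _ => toQ_smul _ _
  simp only [Set.mem_preimage, this]
  exact sum_mem_qPlus (fun b hb => hs hb) (fun b hb => by exact_mod_cast hc b hb)

-- multiset representation of zPlus
lemma mem_zPlus_iff_multiset {x : ι → ℤ} :
    x ∈ zPlus B ↔ ∃ m : Multiset (ι → ℤ), (∀ b ∈ m, b ∈ B) ∧ x = m.sum := by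
  classical
  constructor
  · rintro ⟨s, c, hs, hc, rfl⟩
    refine ⟨s.val.bind (fun b => Multiset.replicate (c b).toNat b), ?_, ?_⟩
    · intro b hb
      obtain ⟨a, ha, hb⟩ := Multiset.mem_bind.1 hb
      rw [Multiset.eq_of_mem_replicate hb]
      exact hs ha
    · rw [Multiset.sum_bind]
      have key : ∀ b ∈ s, c b • b = (Multiset.replicate (c b).toNat b).sum := by
        intro b hb
        rw [Multiset.sum_replicate, ← natCast_zsmul, Int.toNat_of_nonneg (hc b hb)]
      calc ∑ b ∈ s, c b • b = ∑ b ∈ s, (Multiset.replicate (c b).toNat b).sum :=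
            Finset.sum_congr rfl key
        _ = _ := rfl
  · rintro ⟨m, hm, rfl⟩
    refine ⟨m.toFinset, fun b => (m.count b : ℤ), ?_, fun b _ => by positivity, ?_⟩
    · intro b hb; exact hm b (Multiset.mem_toFinset.1 (by exact_mod_cast hb))
    · rw [Finset.sum_multiset_count]
      exact Finset.sum_congr rfl fun b _ => (natCast_zsmul _ _).symm

end Generic

section Graph

variable (G₁ G₂ : SimpleGraph V)

def gen (G : SimpleGraph V) (S : Finset V) : Option ↥G.edgeSet → ℤ :=
  fun o => Option.elim o 1 (fun e => cutFun S e.1)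

lemma mem_XG_iff {G : SimpleGraph V} {x : Option ↥G.edgeSet → ℤ} :
    x ∈ XG G ↔ ∃ S, x = gen G S := Iff.rfl

lemma gen_none (G : SimpleGraph V) (S : Finset V) : gen G S none = 1 := rfl

lemma mem_union_of_sup {e : Sym2 V} (he : e ∈ (G₁ ⊔ G₂).edgeSet) :
    e ∈ G₁.edgeSet ∨ e ∈ G₂.edgeSet := by
  rw [SimpleGraph.edgeSet_sup] at he; exact he

def incl₁ (e : ↥G₁.edgeSet) : ↥(G₁ ⊔ G₂).edgeSet :=
  ⟨e.1, by rw [SimpleGraph.edgeSet_sup]; exact Or.inl e.2⟩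

def incl₂ (e : ↥G₂.edgeSet) : ↥(G₁ ⊔ G₂).edgeSet :=
  ⟨e.1, by rw [SimpleGraph.edgeSet_sup]; exact Or.inr e.2⟩

variable {α : Type}

def pr₁ (x : Option ↥(G₁ ⊔ G₂).edgeSet → α) : Option ↥G₁.edgeSet → α :=
  fun o => x (o.map (incl₁ G₁ G₂))

def pr₂ (x : Option ↥(G₁ ⊔ G₂).edgeSet → α) : Option ↥G₂.edgeSet → α :=
  fun o => x (o.map (incl₂ G₁ G₂))

open Classical in
noncomputable def eps [Zero α] (x : Option ↥G₁.edgeSet → α) :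
    Option ↥(G₁ ⊔ G₂).edgeSet → α :=
  fun o => Option.elim o (x none)
    (fun e => if h : e.1 ∈ G₁.edgeSet then x (some ⟨e.1, h⟩) else 0)

open Classical in
noncomputable def glue (x : Option ↥G₁.edgeSet → ℤ) (y : Option ↥G₂.edgeSet → ℤ) :
    Option ↥(G₁ ⊔ G₂).edgeSet → ℤ :=
  fun o => Option.elim o (x none)
    (fun e => if h : e.1 ∈ G₁.edgeSet then x (some ⟨e.1, h⟩)
      else y (some ⟨e.1, (mem_union_of_sup G₁ G₂ e.2).resolve_left h⟩))

-- cutFun computations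
lemma cutFun_congr {S T : Finset V} {e : Sym2 V} (h : ∀ v ∈ e, (v ∈ S ↔ v ∈ T)) :
    cutFun S e = cutFun T e := by
  induction e using Sym2.ind with
  | _ a b =>
    have ha := h a (Sym2.mem_mk_left a b)
    have hb := h b (Sym2.mem_mk_right a b)
    simp only [cutFun, Sym2.lift_mk, ha, hb]

lemma cutFun_empty (e : Sym2 V) : cutFun (∅ : Finset V) e = 0 := by
  induction e using Sym2.ind with
  | _ a b => simp [cutFun]

variable {V₁ V₂ : Set V}

open Classical in
noncomputable def fil (W : Set V) (S : Finset V) : Finset V := S.filter (fun v => v ∈ W)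

open Classical in
lemma mem_fil {W : Set V} {S : Finset V} {v : V} : v ∈ fil W S ↔ v ∈ S ∧ v ∈ W := by
  simp [fil]

section withHyp
variable (h₁ : ∀ ⦃a b⦄, G₁.Adj a b → a ∈ V₁ ∧ b ∈ V₁)
  (h₂ : ∀ ⦃a b⦄, G₂.Adj a b → a ∈ V₂ ∧ b ∈ V₂)
  (hdisj : V₁ ∩ V₂ = ∅)

include h₁ in
lemma mem_of_edge₁ {e : Sym2 V} (he : e ∈ G₁.edgeSet) : ∀ v ∈ e, v ∈ V₁ := by
  induction e using Sym2.ind with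
  | _ a b =>
    intro v hv
    rw [Sym2.mem_iff] at hv
    rw [SimpleGraph.mem_edgeSet] at he
    rcases hv with rfl | rfl
    exacts [(h₁ he).1, (h₁ he).2]

include h₂ in
lemma mem_of_edge₂ {e : Sym2 V} (he : e ∈ G₂.edgeSet) : ∀ v ∈ e, v ∈ V₂ := by
  induction e using Sym2.ind with
  | _ a b =>
    intro v hv
    rw [Sym2.mem_iff] at hv
    rw [SimpleGraph.mem_edgeSet] at he
    rcases hv with rfl | rfl
    exacts [(h₂ he).1, (h₂ he).2]

include hdisj in
lemma not_mem₂ {v : V} (hv : v ∈ V₁) : v ∉ V₂ := by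
  intro hv2
  have : v ∈ V₁ ∩ V₂ := ⟨hv, hv2⟩
  rw [hdisj] at this
  exact this

include hdisj in
lemma not_mem₁ {v : V} (hv : v ∈ V₂) : v ∉ V₁ := by
  intro hv1
  have : v ∈ V₁ ∩ V₂ := ⟨hv1, hv⟩
  rw [hdisj] at this
  exact this

include h₁ h₂ hdisj in
lemma glue_gen (S T : Finset V) :
    glue G₁ G₂ (gen G₁ S) (gen G₂ T) = gen (G₁ ⊔ G₂) (fil V₁ S ∪ fil V₂ T) := by
  funext o
  cases o with
  | none => rfl
  | some e =>
    simp only [glue, gen, Option.elim_some]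
    split_ifs with h
    · apply cutFun_congr
      intro v hv
      have hv1 : v ∈ V₁ := mem_of_edge₁ G₁ h₁ h v hv
      constructor
      · intro hS; exact Finset.mem_union_left _ (mem_fil.2 ⟨hS, hv1⟩)
      · intro hU
        rcases Finset.mem_union.1 hU with hU | hU
        · exact (mem_fil.1 hU).1
        · exact absurd (mem_fil.1 hU).2 (not_mem₂ hdisj hv1)
    · have he2 : e.1 ∈ G₂.edgeSet := (mem_union_of_sup G₁ G₂ e.2).resolve_left h
      apply cutFun_congr
      intro v hv
      have hv2 : v ∈ V₂ := mem_of_edge₂ G₂ h₂ he2 v hv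
      constructor
      · intro hT; exact Finset.mem_union_right _ (mem_fil.2 ⟨hT, hv2⟩)
      · intro hU
        rcases Finset.mem_union.1 hU with hU | hU
        · exact absurd (mem_fil.1 hU).2 (not_mem₁ hdisj hv2)
        · exact (mem_fil.1 hU).1

include h₁ h₂ hdisj in
lemma eps_gen (S : Finset V) :
    eps G₁ G₂ (gen G₁ S) = gen (G₁ ⊔ G₂) (fil V₁ S) := by
  funext o
  cases o with
  | none => rfl
  | some e =>
    simp only [eps, gen, Option.elim_some]
    split_ifs with h
    · apply cutFun_congr
      intro v hv
      have hv1 : v ∈ V₁ := mem_of_edge₁ G₁ h₁ h v hv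
      exact ⟨fun hS => mem_fil.2 ⟨hS, hv1⟩, fun hU => (mem_fil.1 hU).1⟩
    · have he2 : e.1 ∈ G₂.edgeSet := (mem_union_of_sup G₁ G₂ e.2).resolve_left h
      rw [← cutFun_empty e.1]
      apply cutFun_congr
      intro v hv
      have hv2 : v ∈ V₂ := mem_of_edge₂ G₂ h₂ he2 v hv
      simp only [Finset.notMem_empty, false_iff]
      intro hU
      exact absurd (mem_fil.1 hU).2 (not_mem₁ hdisj hv2)

end withHyp

lemma pr₁_gen (S : Finset V) : pr₁ G₁ G₂ (gen (G₁ ⊔ G₂) S) = gen G₁ S := by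
  funext o; cases o <;> rfl

lemma pr₂_gen (S : Finset V) : pr₂ G₁ G₂ (gen (G₁ ⊔ G₂) S) = gen G₂ S := by
  funext o; cases o <;> rfl

end Graph

section Transfer

variable (G₁ G₂ : SimpleGraph V)

-- pr is precomposition, hence linear
lemma pr₁_sum {α : Type} [AddCommMonoid α] {β : Type} (s : Finset β)
    (f : β → Option ↥(G₁ ⊔ G₂).edgeSet → α) :
    pr₁ G₁ G₂ (∑ b ∈ s, f b) = ∑ b ∈ s, pr₁ G₁ G₂ (f b) := by
  funext o; simp [pr₁, Finset.sum_apply]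

lemma pr₂_sum {α : Type} [AddCommMonoid α] {β : Type} (s : Finset β)
    (f : β → Option ↥(G₁ ⊔ G₂).edgeSet → α) :
    pr₂ G₁ G₂ (∑ b ∈ s, f b) = ∑ b ∈ s, pr₂ G₁ G₂ (f b) := by
  funext o; simp [pr₂, Finset.sum_apply]

lemma pr₁_smul {R α : Type} [SMul R α] (c : R) (x : Option ↥(G₁ ⊔ G₂).edgeSet → α) :
    pr₁ G₁ G₂ (c • x) = c • pr₁ G₁ G₂ x := rfl

lemma pr₂_smul {R α : Type} [SMul R α] (c : R) (x : Option ↥(G₁ ⊔ G₂).edgeSet → α) :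
    pr₂ G₁ G₂ (c • x) = c • pr₂ G₁ G₂ x := rfl

lemma toQ_pr₁ (x : Option ↥(G₁ ⊔ G₂).edgeSet → ℤ) :
    toQ (pr₁ G₁ G₂ x) = pr₁ G₁ G₂ (toQ x) := rfl

lemma toQ_pr₂ (x : Option ↥(G₁ ⊔ G₂).edgeSet → ℤ) :
    toQ (pr₂ G₁ G₂ x) = pr₂ G₁ G₂ (toQ x) := rfl

lemma eps_sum {α : Type} [AddCommMonoid α] {β : Type} (s : Finset β)
    (f : β → Option ↥G₁.edgeSet → α) :
    eps G₁ G₂ (∑ b ∈ s, f b) = ∑ b ∈ s, eps G₁ G₂ (f b) := by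
  funext o
  cases o with
  | none => simp [eps, Finset.sum_apply]
  | some e =>
    by_cases h : e.1 ∈ G₁.edgeSet <;> simp [eps, h, Finset.sum_apply]

lemma eps_smul {R α : Type} [Zero α] [SMulZeroClass R α] (c : R) (x : Option ↥G₁.edgeSet → α) :
    eps G₁ G₂ (c • x) = c • eps G₁ G₂ x := by
  funext o
  cases o with
  | none => rfl
  | some e =>
    by_cases h : e.1 ∈ G₁.edgeSet <;> simp [eps, h]

lemma toQ_eps (x : Option ↥G₁.edgeSet → ℤ) :
    toQ (eps G₁ G₂ x) = eps G₁ G₂ (toQ x) := by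
  funext o
  cases o with
  | none => rfl
  | some e =>
    by_cases h : e.1 ∈ G₁.edgeSet <;> simp [eps, toQ, h]

-- membership transfer along pr₁ / pr₂
lemma pr₁_mem_zSpan {x} (hx : x ∈ zSpan (XG (G₁ ⊔ G₂))) : pr₁ G₁ G₂ x ∈ zSpan (XG G₁) := by
  obtain ⟨s, c, hs, rfl⟩ := hx
  rw [pr₁_sum]
  have : ∀ b ∈ s, pr₁ G₁ G₂ (c b • b) = c b • pr₁ G₁ G₂ b := fun b _ => rfl
  rw [Finset.sum_congr rfl this]
  refine sum_mem_zSpan fun b hb => ?_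
  obtain ⟨S, rfl⟩ := hs hb
  exact ⟨S, (pr₁_gen G₁ G₂ S)⟩

lemma pr₂_mem_zSpan {x} (hx : x ∈ zSpan (XG (G₁ ⊔ G₂))) : pr₂ G₁ G₂ x ∈ zSpan (XG G₂) := by
  obtain ⟨s, c, hs, rfl⟩ := hx
  rw [pr₂_sum]
  have : ∀ b ∈ s, pr₂ G₁ G₂ (c b • b) = c b • pr₂ G₁ G₂ b := fun b _ => rfl
  rw [Finset.sum_congr rfl this]
  refine sum_mem_zSpan fun b hb => ?_
  obtain ⟨S, rfl⟩ := hs hb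
  exact ⟨S, (pr₂_gen G₁ G₂ S)⟩

lemma pr₁_mem_zPlus {x} (hx : x ∈ zPlus (XG (G₁ ⊔ G₂))) : pr₁ G₁ G₂ x ∈ zPlus (XG G₁) := by
  obtain ⟨s, c, hs, hc, rfl⟩ := hx
  rw [pr₁_sum]
  have : ∀ b ∈ s, pr₁ G₁ G₂ (c b • b) = c b • pr₁ G₁ G₂ b := fun b _ => rfl
  rw [Finset.sum_congr rfl this]
  refine sum_mem_zPlus (fun b hb => ?_) hc
  obtain ⟨S, rfl⟩ := hs hb
  exact ⟨S, (pr₁_gen G₁ G₂ S)⟩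

lemma pr₁_mem_qPlus {y} (hy : y ∈ qPlus (XG (G₁ ⊔ G₂))) : pr₁ G₁ G₂ y ∈ qPlus (XG G₁) := by
  obtain ⟨s, c, hs, hc, rfl⟩ := hy
  rw [pr₁_sum]
  have : ∀ b ∈ s, pr₁ G₁ G₂ (c b • toQ b) = c b • toQ (pr₁ G₁ G₂ b) := fun b _ => rfl
  rw [Finset.sum_congr rfl this]
  refine sum_mem_qPlus (fun b hb => ?_) hc
  obtain ⟨S, rfl⟩ := hs hb
  exact ⟨S, (pr₁_gen G₁ G₂ S)⟩

lemma pr₂_mem_qPlus {y} (hy : y ∈ qPlus (XG (G₁ ⊔ G₂))) : pr₂ G₁ G₂ y ∈ qPlus (XG G₂) := by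
  obtain ⟨s, c, hs, hc, rfl⟩ := hy
  rw [pr₂_sum]
  have : ∀ b ∈ s, pr₂ G₁ G₂ (c b • toQ b) = c b • toQ (pr₂ G₁ G₂ b) := fun b _ => rfl
  rw [Finset.sum_congr rfl this]
  refine sum_mem_qPlus (fun b hb => ?_) hc
  obtain ⟨S, rfl⟩ := hs hb
  exact ⟨S, (pr₂_gen G₁ G₂ S)⟩

variable {V₁ V₂ : Set V}
variable (h₁ : ∀ ⦃a b⦄, G₁.Adj a b → a ∈ V₁ ∧ b ∈ V₁)
  (h₂ : ∀ ⦃a b⦄, G₂.Adj a b → a ∈ V₂ ∧ b ∈ V₂)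
  (hdisj : V₁ ∩ V₂ = ∅)

include h₁ h₂ hdisj in
lemma eps_mem_zSpan {x} (hx : x ∈ zSpan (XG G₁)) :
    eps G₁ G₂ x ∈ zSpan (XG (G₁ ⊔ G₂)) := by
  obtain ⟨s, c, hs, rfl⟩ := hx
  rw [eps_sum]
  have : ∀ b ∈ s, eps G₁ G₂ (c b • b) = c b • eps G₁ G₂ b :=
    fun b _ => eps_smul G₁ G₂ (c b) b
  rw [Finset.sum_congr rfl this]
  refine sum_mem_zSpan fun b hb => ?_
  obtain ⟨S, rfl⟩ := hs hb
  exact ⟨fil V₁ S, eps_gen G₁ G₂ h₁ h₂ hdisj S⟩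

include h₁ h₂ hdisj in
lemma eps_mem_qPlus {y} (hy : y ∈ qPlus (XG G₁)) :
    eps G₁ G₂ y ∈ qPlus (XG (G₁ ⊔ G₂)) := by
  obtain ⟨s, c, hs, hc, rfl⟩ := hy
  rw [eps_sum]
  have : ∀ b ∈ s, eps G₁ G₂ (c b • toQ b) = c b • toQ (eps G₁ G₂ b) := by
    intro b _
    rw [eps_smul, toQ_eps]
  rw [Finset.sum_congr rfl this]
  refine sum_mem_qPlus (fun b hb => ?_) hc
  obtain ⟨S, rfl⟩ := hs hb
  exact ⟨fil V₁ S, eps_gen G₁ G₂ h₁ h₂ hdisj S⟩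

lemma pr₁_eps (x : Option ↥G₁.edgeSet → ℤ) : pr₁ G₁ G₂ (eps G₁ G₂ x) = x := by
  classical
  funext o
  cases o with
  | none => rfl
  | some e =>
    show (if h : (incl₁ G₁ G₂ e).1 ∈ G₁.edgeSet then x (some ⟨(incl₁ G₁ G₂ e).1, h⟩) else 0) = _
    exact dif_pos e.2

-- glue lemmas
lemma glue_zero : glue G₁ G₂ 0 0 = 0 := by
  funext o
  cases o with
  | none => rfl
  | some e =>
    by_cases h : e.1 ∈ G₁.edgeSet <;> simp [glue, h]

lemma glue_add (x x' : Option ↥G₁.edgeSet → ℤ) (y y' : Option ↥G₂.edgeSet → ℤ) :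
    glue G₁ G₂ (x + x') (y + y') = glue G₁ G₂ x y + glue G₁ G₂ x' y' := by
  funext o
  cases o with
  | none => rfl
  | some e =>
    by_cases h : e.1 ∈ G₁.edgeSet <;> simp [glue, h]

lemma glue_proj (y : Option ↥(G₁ ⊔ G₂).edgeSet → ℤ) :
    glue G₁ G₂ (pr₁ G₁ G₂ y) (pr₂ G₁ G₂ y) = y := by
  classical
  funext o
  cases o with
  | none => rfl
  | some e =>
    show (if h : e.1 ∈ G₁.edgeSet then y (some (incl₁ G₁ G₂ ⟨e.1, h⟩)) else
      y (some (incl₂ G₁ G₂ ⟨e.1, _⟩))) = y (some e)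
    split_ifs with h
    · rfl
    · rfl

-- sum of a multiset of generators, evaluated at none
lemma sum_none {G : SimpleGraph V} (m : Multiset (Option ↥G.edgeSet → ℤ))
    (hm : ∀ b ∈ m, b ∈ XG G) : m.sum none = (m.card : ℤ) := by
  induction m using Multiset.induction with
  | empty => rfl
  | cons a m ih =>
    have ha : a none = 1 := by
      obtain ⟨S, rfl⟩ := hm a (Multiset.mem_cons_self a m)
      rfl
    have : (a ::ₘ m).sum none = a none + m.sum none := by
      rw [Multiset.sum_cons]; rfl
    rw [this, ha, ih (fun b hb => hm b (Multiset.mem_cons_of_mem hb))]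
    simp [add_comm]

include h₁ h₂ hdisj in
lemma glue_list_mem : ∀ (l₁ : List (Option ↥G₁.edgeSet → ℤ)) (l₂ : List (Option ↥G₂.edgeSet → ℤ)),
    l₁.length = l₂.length → (∀ b ∈ l₁, b ∈ XG G₁) → (∀ b ∈ l₂, b ∈ XG G₂) →
    glue G₁ G₂ l₁.sum l₂.sum ∈ zPlus (XG (G₁ ⊔ G₂))
  | [], [], _, _, _ => by
      rw [List.sum_nil, List.sum_nil, glue_zero]
      exact zero_mem_zPlus
  | a :: t₁, b :: t₂, hlen, hl₁, hl₂ => by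
      rw [List.sum_cons, List.sum_cons, glue_add]
      refine add_mem_zPlus (mem_zPlus_of_mem ?_) ?_
      · obtain ⟨S, rfl⟩ := hl₁ a List.mem_cons_self
        obtain ⟨T, rfl⟩ := hl₂ b List.mem_cons_self
        exact ⟨fil V₁ S ∪ fil V₂ T, glue_gen G₁ G₂ h₁ h₂ hdisj S T⟩
      · exact glue_list_mem t₁ t₂ (by simpa using hlen)
          (fun x hx => hl₁ x (List.mem_cons_of_mem _ hx))
          (fun x hx => hl₂ x (List.mem_cons_of_mem _ hx))

include h₁ h₂ hdisj in
lemma normal_of_normal_parts (hN₁ : IsNormal G₁) (hN₂ : IsNormal G₂) :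
    IsNormal (G₁ ⊔ G₂) := by
  apply le_antisymm zPlus_subset_inter
  rintro y ⟨hspan, hq⟩
  have p1 : pr₁ G₁ G₂ y ∈ zPlus (XG G₁) := by
    rw [hN₁]
    exact ⟨pr₁_mem_zSpan G₁ G₂ hspan, by
      show toQ (pr₁ G₁ G₂ y) ∈ qPlus (XG G₁)
      rw [toQ_pr₁]
      exact pr₁_mem_qPlus G₁ G₂ hq⟩
  have p2 : pr₂ G₁ G₂ y ∈ zPlus (XG G₂) := by
    rw [hN₂]
    exact ⟨pr₂_mem_zSpan G₁ G₂ hspan, by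
      show toQ (pr₂ G₁ G₂ y) ∈ qPlus (XG G₂)
      rw [toQ_pr₂]
      exact pr₂_mem_qPlus G₁ G₂ hq⟩
  obtain ⟨m₁, hm₁, he₁⟩ := mem_zPlus_iff_multiset.1 p1
  obtain ⟨m₂, hm₂, he₂⟩ := mem_zPlus_iff_multiset.1 p2
  have hcard : m₁.card = m₂.card := by
    have c1 : (m₁.card : ℤ) = y none := by rw [← sum_none m₁ hm₁, ← he₁]; rfl
    have c2 : (m₂.card : ℤ) = y none := by rw [← sum_none m₂ hm₂, ← he₂]; rfl
    exact_mod_cast c1.trans c2.symm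
  have hy : y = glue G₁ G₂ m₁.toList.sum m₂.toList.sum := by
    rw [Multiset.sum_toList, Multiset.sum_toList, ← he₁, ← he₂, glue_proj]
  rw [hy]
  exact glue_list_mem G₁ G₂ h₁ h₂ hdisj m₁.toList m₂.toList
    (by rw [Multiset.length_toList, Multiset.length_toList, hcard])
    (fun b hb => hm₁ b (by rwa [← Multiset.mem_toList]))
    (fun b hb => hm₂ b (by rwa [← Multiset.mem_toList]))

include h₁ h₂ hdisj in
lemma normal_part_of_normal (hG : IsNormal (G₁ ⊔ G₂)) : IsNormal G₁ := by
  apply le_antisymm zPlus_subset_inter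
  rintro x ⟨hspan, hq⟩
  have hq' : toQ x ∈ qPlus (XG G₁) := hq
  have h3 : eps G₁ G₂ x ∈ zPlus (XG (G₁ ⊔ G₂)) := by
    rw [hG]
    refine ⟨eps_mem_zSpan G₁ G₂ h₁ h₂ hdisj hspan, ?_⟩
    show toQ (eps G₁ G₂ x) ∈ qPlus (XG (G₁ ⊔ G₂))
    rw [toQ_eps]
    exact eps_mem_qPlus G₁ G₂ h₁ h₂ hdisj hq'
  have h4 := pr₁_mem_zPlus G₁ G₂ h3
  rwa [pr₁_eps] at h4

end Transfer

theorem stmt7 (G₁ G₂ : SimpleGraph V) (V₁ V₂ : Set V)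
    (h₁ : ∀ ⦃a b⦄, G₁.Adj a b → a ∈ V₁ ∧ b ∈ V₁)
    (h₂ : ∀ ⦃a b⦄, G₂.Adj a b → a ∈ V₂ ∧ b ∈ V₂)
    (hdisj : V₁ ∩ V₂ = ∅) :
    IsNormal (G₁ ⊔ G₂) ↔ (IsNormal G₁ ∧ IsNormal G₂) := by
  constructor
  · intro hG
    refine ⟨normal_part_of_normal G₁ G₂ h₁ h₂ hdisj hG, ?_⟩
    have hG' : IsNormal (G₂ ⊔ G₁) := by rwa [sup_comm] at hG
    exact normal_part_of_normal G₂ G₁ h₂ h₁ (by rwa [Set.inter_comm] at hdisj) hG'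
  · rintro ⟨hN₁, hN₂⟩
    exact normal_of_normal_parts G₁ G₂ h₁ h₂ hdisj hN₁ hN₂
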